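/- Let p > 1 and let Θ : (0,∞) → (0,∞) be measurable with 1/Θ ∉ L¹((R₂,∞)) for some R₂ > 0. Suppose Y : [R₂,∞) → ℝ is nondecreasing, differentiable, bounded above, and satisfies (a + b·Y(R))^p ≤ C^p Θ(R) Y'(R) for all R ≥ R₂, where a, b, C > 0 and Y(R₂) ≥ 0. Then a contradiction follows; i.e., no such Y exists. -/

import Mathlib

/-- Nonlinear differential inequality argument: if `1/Θ` is not integrable on `(R₂,∞)`, there is
no nondecreasing, differentiable, bounded-above `Y` with `Y(R₂) ≥ 0` satisfying
`(a + b Y(R))^p ≤ C^p Θ(R) Y'(R)` for all `R ≥ R₂`, where `a, b, C > 0` and `p > 1`. -/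
theorem stmt14 (p a b C R₂ : ℝ) (hp : 1 < p) (ha : 0 < a) (hb : 0 < b) (hC : 0 < C)
    (hR₂ : 0 < R₂) (Θ : ℝ → ℝ) (hΘmeas : Measurable Θ) (hΘpos : ∀ R, 0 < Θ R)
    (hΘ : ¬ MeasureTheory.IntegrableOn (fun R => (Θ R)⁻¹) (Set.Ioi R₂))
    (Y : ℝ → ℝ) (hYmono : MonotoneOn Y (Set.Ici R₂))
    (hYdiff : ∀ R ≥ R₂, DifferentiableAt ℝ Y R)
    (B : ℝ) (hYB : ∀ R ≥ R₂, Y R ≤ B) (hY0 : 0 ≤ Y R₂)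
    (hineq : ∀ R ≥ R₂, (a + b * Y R) ^ p ≤ C ^ p * Θ R * deriv Y R) : False := by
  apply hΘ
  -- Y is nonnegative on [R₂, ∞)
  have hYnn : ∀ R ≥ R₂, 0 ≤ Y R := fun R hR =>
    hY0.trans (hYmono Set.self_mem_Ici hR hR)
  -- a + b Y R > 0
  have hpos : ∀ R ≥ R₂, 0 < a + b * Y R := fun R hR => by
    have := hYnn R hR; nlinarith
  -- deriv Y is nonnegative on [R₂, ∞)
  have hderivnn : ∀ R ≥ R₂, 0 ≤ deriv Y R := by
    intro R hR
    have h1 : 0 < (a + b * Y R) ^ p := Real.rpow_pos_of_pos (hpos R hR) p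
    have h2 := hineq R hR
    have hCp : 0 < C ^ p := Real.rpow_pos_of_pos hC p
    nlinarith [mul_pos hCp (hΘpos R)]
  -- Y tends to a limit at infinity
  obtain ⟨l, hl⟩ : ∃ l, Filter.Tendsto Y Filter.atTop (nhds l) := by
    set g : ℝ → ℝ := fun R => Y (max R R₂) with hg
    have hgmono : Monotone g := fun x y hxy =>
      hYmono (Set.mem_Ici.2 (le_max_right _ _)) (Set.mem_Ici.2 (le_max_right _ _)) (max_le_max hxy le_rfl)
    have hgbdd : BddAbove (Set.range g) := by
      refine ⟨B, fun z hz => ?_⟩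
      obtain ⟨x, rfl⟩ := hz
      exact hYB _ (le_max_right _ _)
    have hgt := tendsto_atTop_ciSup hgmono hgbdd
    refine ⟨_, hgt.congr' ?_⟩
    filter_upwards [Filter.eventually_ge_atTop R₂] with x hx
    simp [hg, max_eq_left hx]
  -- deriv Y is integrable on (R₂, ∞)
  have hint : MeasureTheory.IntegrableOn (deriv Y) (Set.Ioi R₂) :=
    MeasureTheory.integrableOn_Ioi_deriv_of_nonneg'
      (fun x hx => (hYdiff x hx).hasDerivAt)
      (fun x hx => hderivnn x (le_of_lt hx)) hl
  -- comparison
  have hCp : 0 < C ^ p := Real.rpow_pos_of_pos hC p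
  have hap : 0 < a ^ p := Real.rpow_pos_of_pos ha p
  refine MeasureTheory.Integrable.mono'
    ((hint.const_mul (C ^ p / a ^ p))) ?_ ?_
  · exact (hΘmeas.inv).aestronglyMeasurable.restrict
  · refine (MeasureTheory.ae_restrict_iff' measurableSet_Ioi).2 ?_
    filter_upwards with R hR
    have hR' : R₂ ≤ R := le_of_lt hR
    have h1 : a ^ p ≤ (a + b * Y R) ^ p := by
      apply Real.rpow_le_rpow (le_of_lt ha) _ (by linarith)
      nlinarith [hYnn R hR']
    have key : a ^ p ≤ Θ R * (C ^ p * deriv Y R) :=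
      (h1.trans (hineq R hR')).trans_eq (by ring)
    have hΘR := hΘpos R
    have hd := hderivnn R hR'
    rw [Real.norm_eq_abs, abs_of_nonneg (by positivity), inv_eq_one_div]
    rw [div_le_iff₀ hΘR, div_mul_eq_mul_div, div_mul_eq_mul_div, le_div_iff₀ hap, one_mul]
    nlinarith [key]
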